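/- Let q ∈ (0,1] be a real number. Then the least element of the set {x ∈ [0,1] | x = (1−q) + q·x²} equals (1 − |2q − 1|)/(2q); equivalently, it equals 1 when q ≤ 1/2 and (1−q)/q when q ≥ 1/2. -/

import Mathlib

/-- For `q ∈ (0,1]`, the least element of `{x ∈ [0,1] | x = (1−q) + qx²}` is
`(1 − |2q−1|)/(2q)`; equivalently, it is `1` for `q ≤ 1/2` and `(1−q)/q` for
`q ≥ 1/2`. -/
theorem stmt15 (q : ℝ) (hq0 : 0 < q) (hq1 : q ≤ 1) :
    IsLeast {x : ℝ | x ∈ Set.Icc (0 : ℝ) 1 ∧ x = (1 - q) + q * x ^ 2}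
      ((1 - |2 * q - 1|) / (2 * q)) ∧
    (q ≤ 1 / 2 → (1 - |2 * q - 1|) / (2 * q) = 1) ∧
    (1 / 2 ≤ q → (1 - |2 * q - 1|) / (2 * q) = (1 - q) / q) := by
  have hqne : q ≠ 0 := ne_of_gt hq0
  have hvals : ∀ x : ℝ, x = (1 - q) + q * x ^ 2 → x = 1 ∨ x = (1 - q) / q := by
    intro x hx
    have h : (x - 1) * (q * x - (1 - q)) = 0 := by linear_combination -hx
    rcases mul_eq_zero.1 h with h1 | h2
    · left; linarith
    · right; field_simp; linarith
  by_cases hq : q ≤ 1 / 2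
  · have habs : |2 * q - 1| = 1 - 2 * q := by
      rw [abs_of_nonpos (by linarith)]; ring
    have hm : (1 - |2 * q - 1|) / (2 * q) = 1 := by
      rw [habs]; field_simp; ring
    refine ⟨⟨⟨by simp [hm], by rw [hm]; ring⟩, ?_⟩, fun _ => hm, fun h2 => ?_⟩
    · rintro x ⟨⟨hx0, hx1⟩, hx⟩
      rw [hm]
      rcases hvals x hx with h | h
      · linarith
      · rw [h, le_div_iff₀ hq0]; linarith
    · have : q = 1 / 2 := le_antisymm hq h2
      rw [hm, this]; norm_num
  · push_neg at hq
    have habs : |2 * q - 1| = 2 * q - 1 := abs_of_nonneg (by linarith)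
    have hm : (1 - |2 * q - 1|) / (2 * q) = (1 - q) / q := by
      rw [habs]; field_simp; ring
    have hle1 : (1 - q) / q ≤ 1 := by rw [div_le_one hq0]; linarith
    have hge0 : 0 ≤ (1 - q) / q := div_nonneg (by linarith) hq0.le
    refine ⟨⟨⟨by rw [hm]; exact ⟨hge0, hle1⟩, ?_⟩, ?_⟩, fun h2 => by linarith, fun _ => hm⟩
    · rw [hm]; field_simp; ring
    · rintro x ⟨⟨hx0, hx1⟩, hx⟩
      rw [hm]
      rcases hvals x hx with h | h
      · rw [h]; exact hle1
      · rw [h]
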